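/- Let X be a second countable Baire complex topological vector space and Γ a set of continuous linear operators on X. Then the set 𝔻C(Γ) of diskcyclic vectors for Γ is dense in X if and only if Γ is disk transitive. In this case Γ is diskcyclic and 𝔻C(Γ) is a dense Gδ subset of X. -/

import Mathlib

open scoped Pointwise

/-- On a second countable Baire complex topological vector space, the set of diskcyclic
vectors of `Γ` is dense iff `Γ` is disk transitive; in this case `Γ` is diskcyclic and
the set of diskcyclic vectors is a dense `Gδ` set. -/
theorem stmt_7 {X : Type*} [AddCommGroup X] [Module ℂ X] [TopologicalSpace X]
    [IsTopologicalAddGroup X] [ContinuousSMul ℂ X] [SecondCountableTopology X]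
    [BaireSpace X] (Γ : Set (X →L[ℂ] X)) :
    (Dense {x : X | Dense {y : X | ∃ α : ℂ, ‖α‖ ≤ 1 ∧ ∃ T ∈ Γ, y = α • T x}} ↔
      (∀ U V : Set X, IsOpen U → IsOpen V → U.Nonempty → V.Nonempty →
        ∃ α : ℂ, α ≠ 0 ∧ ‖α‖ ≤ 1 ∧ ∃ T ∈ Γ, (⇑T '' (α • U) ∩ V).Nonempty)) ∧
    ((∀ U V : Set X, IsOpen U → IsOpen V → U.Nonempty → V.Nonempty →
        ∃ α : ℂ, α ≠ 0 ∧ ‖α‖ ≤ 1 ∧ ∃ T ∈ Γ, (⇑T '' (α • U) ∩ V).Nonempty) →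
      (∃ x : X, Dense {y : X | ∃ α : ℂ, ‖α‖ ≤ 1 ∧ ∃ T ∈ Γ, y = α • T x}) ∧
      Dense {x : X | Dense {y : X | ∃ α : ℂ, ‖α‖ ≤ 1 ∧ ∃ T ∈ Γ, y = α • T x}} ∧
      IsGδ {x : X | Dense {y : X | ∃ α : ℂ, ‖α‖ ≤ 1 ∧ ∃ T ∈ Γ, y = α • T x}}) := by
  obtain ⟨B, hBc, hBne, hBbasis⟩ := TopologicalSpace.exists_countable_basis X
  set DC : Set X := {x : X | Dense {y : X | ∃ α : ℂ, ‖α‖ ≤ 1 ∧ ∃ T ∈ Γ, y = α • T x}}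
    with hDC
  -- characterization of DC as intersection over basis
  have hDCeq : DC = ⋂ V ∈ B, {x : X | ∃ α : ℂ, ‖α‖ ≤ 1 ∧ ∃ T ∈ Γ, α • T x ∈ V} := by
    ext x
    simp only [hDC, Set.mem_setOf_eq, Set.mem_iInter]
    rw [hBbasis.dense_iff]
    constructor
    · intro h V hV
      have hVne : V.Nonempty := Set.nonempty_iff_ne_empty.2 (by rintro rfl; exact hBne hV)
      obtain ⟨y, hyV, α, hα, T, hT, rfl⟩ := h V hV hVne
      exact ⟨α, hα, T, hT, hyV⟩
    · intro h V hV _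
      obtain ⟨α, hα, T, hT, hmem⟩ := h V hV
      exact ⟨α • T x, hmem, α, hα, T, hT, rfl⟩
  have hOpen : ∀ V : Set X, IsOpen V →
      IsOpen {x : X | ∃ α : ℂ, ‖α‖ ≤ 1 ∧ ∃ T ∈ Γ, α • T x ∈ V} := by
    intro V hV
    have : {x : X | ∃ α : ℂ, ‖α‖ ≤ 1 ∧ ∃ T ∈ Γ, α • T x ∈ V}
        = ⋃ α ∈ {α : ℂ | ‖α‖ ≤ 1}, ⋃ T ∈ Γ, (fun x => α • T x) ⁻¹' V := by
      ext x
      simp only [Set.mem_setOf_eq, Set.mem_iUnion, Set.mem_preimage, exists_prop]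
    rw [this]
    exact isOpen_biUnion fun α _ => isOpen_biUnion fun T _ =>
      hV.preimage (T.continuous.const_smul α)
  -- disk transitivity implies DC dense
  have hDense : (∀ U V : Set X, IsOpen U → IsOpen V → U.Nonempty → V.Nonempty →
      ∃ α : ℂ, α ≠ 0 ∧ ‖α‖ ≤ 1 ∧ ∃ T ∈ Γ, (⇑T '' (α • U) ∩ V).Nonempty) → Dense DC := by
    intro htrans
    rw [hDCeq]
    refine dense_biInter_of_isOpen (fun V hV => hOpen V (hBbasis.isOpen hV)) hBc ?_
    intro V hV
    rw [dense_iff_inter_open]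
    intro U hU hUne
    have hVne : V.Nonempty := Set.nonempty_iff_ne_empty.2 (by rintro rfl; exact hBne hV)
    obtain ⟨α, hα0, hα1, T, hT, y, hyT, hyV⟩ :=
      htrans U V hU (hBbasis.isOpen hV) hUne hVne
    obtain ⟨z, hz, rfl⟩ := hyT
    obtain ⟨u, hu, rfl⟩ := hz
    refine ⟨u, hu, α, hα1, T, hT, ?_⟩
    rwa [← T.map_smul]
  refine ⟨⟨?_, ?_⟩, ?_⟩
  · -- Dense DC → disk transitive
    intro h U V hU hV hUne hVne
    obtain ⟨x, hxU, hxDC⟩ := h.inter_open_nonempty U hU hUne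
    have horb : Dense {y : X | ∃ α : ℂ, ‖α‖ ≤ 1 ∧ ∃ T ∈ Γ, y = α • T x} := hxDC
    obtain ⟨y, hyV, α, hα1, T, hT, rfl⟩ := horb.inter_open_nonempty V hV hVne
    by_cases hα0 : α = 0
    · -- the orbit point in V is 0; find a small nonzero scalar instead
      have h0V : (0 : X) ∈ V := by simpa [hα0] using hyV
      have hcont : Continuous fun c : ℂ => c • T x := continuous_id.smul continuous_const
      have hW : (fun c : ℂ => c • T x) ⁻¹' V ∈ nhds (0 : ℂ) := by
        apply hcont.continuousAt.preimage_mem_nhds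
        simpa using hV.mem_nhds h0V
      have hball : Metric.ball (0 : ℂ) 1 ∈ nhds (0 : ℂ) := Metric.ball_mem_nhds _ one_pos
      have hev : ∀ᶠ c in nhdsWithin (0 : ℂ) {(0 : ℂ)}ᶜ, c • T x ∈ V ∧ ‖c‖ < 1 := by
        apply Filter.Eventually.filter_mono nhdsWithin_le_nhds
        filter_upwards [hW, hball] with c h1 h2
        exact ⟨h1, by simpa using h2⟩
      obtain ⟨c, ⟨hcV, hclt⟩, hc0⟩ := (hev.and eventually_mem_nhdsWithin).exists
      rw [Set.mem_compl_singleton_iff] at hc0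
      exact ⟨c, hc0, hclt.le, T, hT,
        ⟨c • T x, ⟨⟨c • x, Set.smul_mem_smul_set hxU, T.map_smul c x⟩, hcV⟩⟩⟩
    · exact ⟨α, hα0, hα1, T, hT,
        ⟨α • T x, ⟨⟨α • x, Set.smul_mem_smul_set hxU, T.map_smul α x⟩, hyV⟩⟩⟩
  · exact hDense
  · intro htrans
    have hd := hDense htrans
    refine ⟨?_, hd, ?_⟩
    · obtain ⟨x, hx⟩ := hd.nonempty
      exact ⟨x, hx⟩
    · rw [hDCeq]
      exact IsGδ.biInter hBc fun V hV => (hOpen V (hBbasis.isOpen hV)).isGδ
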